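/- One-step lift existence: Given any tropical n×(n+1) matrix O (real entries), there exists a matrix B over the Puiseux series field with T(b_{ij}) = o_{ij} for all i, j such that every maximal minor of B is nonzero and T(det(B^i)) = |O^i|_t for all i = 1,…,n+1; consequently the classical Cramer solution of B tropicalizes to the stable tropical solution [|O^1|_t : … : |O^{n+1}|_t]. -/

import Mathlib

/-- Tropicalization map on the field of (generalized) Puiseux series
`HahnSeries ℝ ℂ`: `T x = - ord x`. -/
noncomputable def T (x : HahnSeries ℝ ℂ) : ℝ := -x.order

/-- Principal coefficient: the coefficient of the lowest-order term. -/
noncomputable def Pc (x : HahnSeries ℝ ℂ) : ℂ := x.coeff x.order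

/-- Tropical determinant of a real square matrix. -/
noncomputable def tropDet {n : ℕ} (O : Matrix (Fin n) (Fin n) ℝ) : ℝ :=
  Finset.univ.sup' Finset.univ_nonempty (fun σ : Equiv.Perm (Fin n) => ∑ i, O i (σ i))

/-- Pseudo-determinant of `A` with respect to the tropical matrix `O`. -/
noncomputable def pseudoDet {n : ℕ} {R : Type*} [CommRing R]
    (O : Matrix (Fin n) (Fin n) ℝ) (A : Matrix (Fin n) (Fin n) R) : R :=
  ∑ σ ∈ Finset.univ.filter
      (fun σ : Equiv.Perm (Fin n) => ∑ i, O i (σ i) = tropDet O),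
    (Equiv.Perm.sign σ : ℤ) • ∏ i, A i (σ i)

open Finset MvPolynomial

private lemma prod_hahn_single {ι : Type*} (s : Finset ι) (f : ι → ℝ) (g : ι → ℂ) :
    ∏ i ∈ s, HahnSeries.single (f i) (g i)
      = HahnSeries.single (∑ i ∈ s, f i) (∏ i ∈ s, g i) := by
  classical
  induction s using Finset.induction_on with
  | empty => simp [HahnSeries.single_zero_one]
  | insert _ _ h ih =>
      rw [Finset.prod_insert h, ih, HahnSeries.single_mul_single,
        Finset.sum_insert h, Finset.prod_insert h]

private lemma prod_X_eq {ι κ : Type*} [DecidableEq κ] (s : Finset ι) (f : ι → κ) :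
    (∏ i ∈ s, (X (f i) : MvPolynomial κ ℂ))
      = monomial (∑ i ∈ s, Finsupp.single (f i) 1) 1 := by
  classical
  induction s using Finset.induction_on with
  | empty => simp
  | insert _ _ h ih =>
      rw [Finset.prod_insert h, ih, show (X (f _) : MvPolynomial κ ℂ)
          = monomial (Finsupp.single (f _) 1) 1 by
            rw [← pow_one (X (f _)), X_pow_eq_monomial],
        monomial_mul, Finset.sum_insert h, one_mul]

private lemma map_pseudoDet {m : ℕ} {R S : Type*} [CommRing R] [CommRing S] (f : R →+* S)
    (O' : Matrix (Fin m) (Fin m) ℝ) (A : Matrix (Fin m) (Fin m) R) :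
    f (pseudoDet O' A) = pseudoDet O' (Matrix.of fun i j => f (A i j)) := by
  unfold pseudoDet
  rw [map_sum]
  exact Finset.sum_congr rfl fun σ _ => by rw [map_zsmul, map_prod]; rfl

private lemma pseudoDet_X_ne_zero {m : ℕ} {ι : Type*} [DecidableEq ι]
    (O' : Matrix (Fin m) (Fin m) ℝ) (v : Fin m × Fin m → ι)
    (hv : Function.Injective v) :
    pseudoDet O' (Matrix.of fun a b => (X (v (a, b)) : MvPolynomial ι ℂ)) ≠ 0 := by
  classical
  obtain ⟨σ₀, -, hσ₀⟩ := Finset.exists_mem_eq_sup' Finset.univ_nonempty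
    (fun σ : Equiv.Perm (Fin m) => ∑ i, O' i (σ i))
  set m₀ : ι →₀ ℕ := ∑ a, Finsupp.single (v (a, σ₀ a)) 1 with hm₀
  have key : ∀ σ : Equiv.Perm (Fin m),
      (∑ a, Finsupp.single (v (a, σ a)) 1 : ι →₀ ℕ) = m₀ → σ = σ₀ := by
    intro σ hσ
    ext a
    have h1 : (∑ a', Finsupp.single (v (a', σ a')) 1 : ι →₀ ℕ) (v (a, σ a)) ≠ 0 := by
      rw [Finsupp.finset_sum_apply]
      intro h0
      have := (Finset.sum_eq_zero_iff).1 h0 a (Finset.mem_univ a)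
      simp [Finsupp.single_apply] at this
    rw [hσ, hm₀, Finsupp.finset_sum_apply] at h1
    obtain ⟨a', -, ha'⟩ := Finset.exists_ne_zero_of_sum_ne_zero h1
    rw [Finsupp.single_apply] at ha'
    have heq : v (a', σ₀ a') = v (a, σ a) := by
      by_contra hne; simp [hne] at ha'
    have h' := hv heq
    rw [Prod.mk.injEq] at h'
    obtain ⟨ha, hb⟩ := h'
    subst ha
    exact congrArg Fin.val hb.symm
  have hco : MvPolynomial.coeff m₀
      (pseudoDet O' (Matrix.of fun a b => (X (v (a, b)) : MvPolynomial ι ℂ)))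
      = ((Equiv.Perm.sign σ₀ : ℤ) : ℂ) := by
    unfold pseudoDet
    rw [MvPolynomial.coeff_sum]
    have hterm : ∀ σ : Equiv.Perm (Fin m),
        MvPolynomial.coeff m₀ ((Equiv.Perm.sign σ : ℤ) •
          ∏ i, (Matrix.of fun a b => (X (v (a, b)) : MvPolynomial ι ℂ)) i (σ i))
        = (Equiv.Perm.sign σ : ℤ) •
            (if (∑ a, Finsupp.single (v (a, σ a)) 1 : ι →₀ ℕ) = m₀ then (1:ℂ) else 0) := by
      intro σ
      rw [MvPolynomial.coeff_smul]
      congr 1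
      have : (∏ i, (Matrix.of fun a b => (X (v (a, b)) : MvPolynomial ι ℂ)) i (σ i))
          = monomial (∑ a, Finsupp.single (v (a, σ a)) 1) (1 : ℂ) :=
        prod_X_eq Finset.univ fun a => v (a, σ a)
      rw [this, MvPolynomial.coeff_monomial]
    rw [Finset.sum_congr rfl fun σ _ => hterm σ]
    rw [Finset.sum_eq_single σ₀]
    · have : (∑ a, Finsupp.single (v (a, σ₀ a)) 1 : ι →₀ ℕ) = m₀ := rfl
      rw [if_pos this]
      simp
    · intro σ hσmem hσne
      rw [if_neg fun h => hσne (key σ h), smul_zero]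
    · intro hmem
      exfalso
      exact hmem (Finset.mem_filter.2 ⟨Finset.mem_univ _, hσ₀.symm⟩)
  intro h
  rw [h, MvPolynomial.coeff_zero] at hco
  have : ((Equiv.Perm.sign σ₀ : ℤ) : ℂ) ≠ 0 := by
    simp [Int.cast_ne_zero]
  exact this hco.symm

private lemma coeff_sum' {α : Type*} (s : Finset α) (f : α → HahnSeries ℝ ℂ) (g : ℝ) :
    (∑ i ∈ s, f i).coeff g = ∑ i ∈ s, (f i).coeff g :=
  map_sum (HahnSeries.coeff.addMonoidHom g) f s

private lemma det_eq_sum_perm {m : ℕ} {R : Type*} [CommRing R]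
    (M : Matrix (Fin m) (Fin m) R) :
    M.det = ∑ σ : Equiv.Perm (Fin m), ((Equiv.Perm.sign σ : ℤ) : R) * ∏ i, M i (σ i) := by
  rw [← Matrix.det_transpose, Matrix.det_apply']
  exact Finset.sum_congr rfl fun σ _ => by simp [Matrix.transpose_apply]

private lemma det_single_matrix {m : ℕ} (O' : Matrix (Fin m) (Fin m) ℝ)
    (c : Matrix (Fin m) (Fin m) ℂ) (hc : pseudoDet O' c ≠ 0) :
    (Matrix.of fun i j => HahnSeries.single (-(O' i j)) (c i j) :
        Matrix (Fin m) (Fin m) (HahnSeries ℝ ℂ)).det ≠ 0 ∧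
    (Matrix.of fun i j => HahnSeries.single (-(O' i j)) (c i j) :
        Matrix (Fin m) (Fin m) (HahnSeries ℝ ℂ)).det.order = -(tropDet O') := by
  classical
  set M : Matrix (Fin m) (Fin m) (HahnSeries ℝ ℂ) :=
    Matrix.of fun i j => HahnSeries.single (-(O' i j)) (c i j) with hM
  have hdet : M.det = ∑ σ : Equiv.Perm (Fin m),
      HahnSeries.single (-(∑ i, O' i (σ i)))
        (((Equiv.Perm.sign σ : ℤ) : ℂ) * ∏ i, c i (σ i)) := by
    rw [det_eq_sum_perm]
    refine Finset.sum_congr rfl fun σ _ => ?_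
    have h1 : (∏ i, M i (σ i))
        = HahnSeries.single (∑ i, -(O' i (σ i))) (∏ i, c i (σ i)) :=
      prod_hahn_single Finset.univ _ _
    have h2 : (((Equiv.Perm.sign σ : ℤ) : HahnSeries ℝ ℂ))
        = HahnSeries.single (0:ℝ) (((Equiv.Perm.sign σ : ℤ) : ℂ)) := by
      rw [show ((((Equiv.Perm.sign σ : ℤ)) : HahnSeries ℝ ℂ))
          = HahnSeries.C (((Equiv.Perm.sign σ : ℤ) : ℂ)) from (map_intCast HahnSeries.C _).symm]
      rfl
    rw [h1, h2, HahnSeries.single_mul_single, zero_add, ← Finset.sum_neg_distrib]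
  have hcoeff : ∀ g : ℝ, M.det.coeff g
      = ∑ σ ∈ Finset.univ.filter
          (fun σ : Equiv.Perm (Fin m) => g = -(∑ i, O' i (σ i))),
          (((Equiv.Perm.sign σ : ℤ) : ℂ) * ∏ i, c i (σ i)) := by
    intro g
    rw [hdet, coeff_sum']
    simp only [HahnSeries.coeff_single]
    rw [← Finset.sum_filter]
  have hmain : M.det.coeff (-(tropDet O')) = pseudoDet O' c := by
    rw [hcoeff]
    unfold pseudoDet
    refine Finset.sum_congr ?_ fun σ _ => ?_
    · congr 1
      ext σ
      simp only [Finset.mem_filter, Finset.mem_univ, true_and, neg_inj]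
      exact eq_comm
    · rw [zsmul_eq_mul]
  have hlow : ∀ g : ℝ, g < -(tropDet O') → M.det.coeff g = 0 := by
    intro g hg
    rw [hcoeff]
    apply Finset.sum_eq_zero
    intro σ hσ
    exfalso
    have hmem := ((Finset.mem_filter.1 hσ).2).symm
    have hle : (∑ i, O' i (σ i)) ≤ tropDet O' :=
      Finset.le_sup' (fun σ : Equiv.Perm (Fin m) => ∑ i, O' i (σ i)) (Finset.mem_univ σ)
    have : -(tropDet O') ≤ -(∑ i, O' i (σ i)) := neg_le_neg hle
    rw [hmem] at this
    exact absurd this (not_le.2 hg)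
  have hne : M.det ≠ 0 := by
    intro h0
    rw [h0] at hmain
    exact hc (by simpa using hmain.symm)
  refine ⟨hne, le_antisymm ?_ ?_⟩
  · exact HahnSeries.order_le_of_coeff_ne_zero (by rw [hmain]; exact hc)
  · by_contra hlt
    push_neg at hlt
    exact hne (HahnSeries.coeff_order_eq_zero.1 (hlow _ hlt))

private lemma order_neg_one_pow_mul (m : ℕ) (x : HahnSeries ℝ ℂ) :
    ((-1 : HahnSeries ℝ ℂ) ^ m * x).order = x.order := by
  induction m generalizing x with
  | zero => simp
  | succ m ih =>
      have h : ((-1 : HahnSeries ℝ ℂ)) ^ (m + 1) * x = (-1) ^ m * (-x) := by ring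
      rw [h, ih, HahnSeries.order_neg]

theorem one_step_lift_exists {n : ℕ} (O : Matrix (Fin n) (Fin (n + 1)) ℝ) :
    ∃ B : Matrix (Fin n) (Fin (n + 1)) (HahnSeries ℝ ℂ),
      (∀ i j, B i j ≠ 0) ∧
      (∀ i j, T (B i j) = O i j) ∧
      (∀ i : Fin (n + 1), (B.submatrix id i.succAbove).det ≠ 0) ∧
      (∀ i : Fin (n + 1),
        T (B.submatrix id i.succAbove).det = tropDet (O.submatrix id i.succAbove)) ∧
      ∃ s : Fin (n + 1) → HahnSeries ℝ ℂ,
        (∀ i : Fin (n + 1),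
          s i = (-1) ^ (i : ℕ) * (B.submatrix id i.succAbove).det) ∧
        B.mulVec s = 0 ∧
        ∀ i : Fin (n + 1), T (s i) = tropDet (O.submatrix id i.succAbove) := by
  classical
  -- choose generic complex constants
  obtain ⟨c, hc0, hcps⟩ : ∃ c : Fin n × Fin (n+1) → ℂ, (∀ p, c p ≠ 0) ∧
      ∀ k : Fin (n+1), pseudoDet (O.submatrix id k.succAbove)
        (Matrix.of fun a b => c (a, k.succAbove b)) ≠ 0 := by
    set P : MvPolynomial (Fin n × Fin (n+1)) ℂ :=
      (∏ p, X p) * ∏ k : Fin (n+1), pseudoDet (O.submatrix id k.succAbove)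
        (Matrix.of fun a b => X (a, k.succAbove b)) with hP
    have hPne : P ≠ 0 := by
      apply mul_ne_zero
      · exact Finset.prod_ne_zero_iff.2 fun p _ => X_ne_zero p
      · refine Finset.prod_ne_zero_iff.2 fun k _ => ?_
        refine pseudoDet_X_ne_zero _ (fun p => (p.1, k.succAbove p.2)) ?_
        intro p q hpq
        have h1 := (Prod.ext_iff.1 hpq).1
        have h2 := Fin.succAbove_right_injective (Prod.ext_iff.1 hpq).2
        exact Prod.ext h1 h2
    have hex : ¬ ∀ x, eval x P = 0 := by
      intro h
      exact hPne (MvPolynomial.funext fun x => by simp [h x])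
    push_neg at hex
    obtain ⟨c, hc⟩ := hex
    rw [hP, map_mul, map_prod, map_prod] at hc
    refine ⟨c, ?_, ?_⟩
    · intro p
      intro h0
      apply hc
      rw [mul_eq_zero]
      left
      exact Finset.prod_eq_zero (Finset.mem_univ p) (by simp [h0])
    · intro k
      intro h0
      apply hc
      rw [mul_eq_zero]
      right
      refine Finset.prod_eq_zero (Finset.mem_univ k) ?_
      rw [map_pseudoDet (eval c)]
      convert h0 using 2
      ext a b
      simp
  set B : Matrix (Fin n) (Fin (n+1)) (HahnSeries ℝ ℂ) :=
    Matrix.of fun i j => HahnSeries.single (-(O i j)) (c (i, j)) with hB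
  have hsub : ∀ k : Fin (n+1), B.submatrix id k.succAbove
      = Matrix.of fun i j => HahnSeries.single (-((O.submatrix id k.succAbove) i j))
          ((Matrix.of fun a b => c (a, k.succAbove b)) i j) := by
    intro k; ext i j; simp [hB]
  have hdets := fun k : Fin (n+1) =>
    det_single_matrix (O.submatrix id k.succAbove)
      (Matrix.of fun a b => c (a, k.succAbove b)) (hcps k)
  have hdetne : ∀ k : Fin (n+1), (B.submatrix id k.succAbove).det ≠ 0 := by
    intro k; rw [hsub k]; exact (hdets k).1
  have hdetord : ∀ k : Fin (n+1),
      (B.submatrix id k.succAbove).det.order = -(tropDet (O.submatrix id k.succAbove)) := by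
    intro k; rw [hsub k]; exact (hdets k).2
  refine ⟨B, ?_, ?_, hdetne, ?_, ?_⟩
  · intro i j; exact HahnSeries.single_ne_zero (hc0 (i, j))
  · intro i j
    show -(HahnSeries.single (-(O i j)) (c (i,j))).order = O i j
    rw [HahnSeries.order_single (hc0 (i, j)), neg_neg]
  · intro k
    show -(B.submatrix id k.succAbove).det.order = _
    rw [hdetord k, neg_neg]
  · refine ⟨fun k => (-1) ^ (k : ℕ) * (B.submatrix id k.succAbove).det,
      fun _ => rfl, ?_, ?_⟩
    · -- Cramer relation
      funext i
      show ∑ j, B i j * ((-1) ^ (j : ℕ) * (B.submatrix id j.succAbove).det) = 0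
      set M1 : Matrix (Fin (n+1)) (Fin (n+1)) (HahnSeries ℝ ℂ) :=
        Matrix.of (Fin.cases (B i) B) with hM1
      have hdup : M1.det = 0 := by
        refine Matrix.det_zero_of_row_eq (i := (0 : Fin (n+1))) (j := i.succ)
          (Fin.succ_ne_zero i).symm ?_
        funext j
        simp [hM1]
        rfl
      have hexp := Matrix.det_succ_row_zero M1
      have hsub1 : ∀ j : Fin (n+1),
          M1.submatrix Fin.succ j.succAbove = B.submatrix id j.succAbove := by
        intro j; ext a b; simp [hM1]; rfl
      have h0j : ∀ j : Fin (n+1), M1 0 j = B i j := by intro j; simp [hM1]; rfl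
      have hzero : ∑ j : Fin (n+1),
          (-1 : HahnSeries ℝ ℂ) ^ (j : ℕ) * B i j * (B.submatrix id j.succAbove).det
            = 0 := by
        rw [← hdup, hexp]
        exact Finset.sum_congr rfl fun j _ => by rw [hsub1 j, h0j j]
      rw [← hzero]
      exact Finset.sum_congr rfl fun j _ => by ring
    · intro k
      show -((-1 : HahnSeries ℝ ℂ) ^ (k : ℕ) * (B.submatrix id k.succAbove).det).order = _
      rw [order_neg_one_pow_mul, hdetord k, neg_neg]
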